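/- Let G be a k-uniform hm-bipartite hypergraph on vertex set {1,…,n} with hm-bipartition V = V1 ∪ V2, and let A denote its adjacency tensor. If λ ∈ ℂ is an eigenvalue of A with eigenvector x ∈ ℂ^n, and α ∈ ℂ satisfies α^k = 1, then αλ is also an eigenvalue of A; explicitly, the vector y defined by y_i = α·x_i for i ∈ V1 and y_i = x_i for i ∈ V2 is an eigenvector of A associated with αλ. Hence the set of eigenvalues of the adjacency tensor of an hm-bipartite hypergraph is invariant under multiplication by any k-th root of unity. -/
import Mathlib


open Finset

/-- Degree of vertex `i` in the hypergraph with edge set `E`. -/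
def hdeg {n : ℕ} (E : Finset (Finset (Fin n))) (i : Fin n) : ℕ :=
  (E.filter fun e => i ∈ e).card

/-- Adjacency tensor action `(A x^{k-1})_i`. -/
noncomputable def adjC {n : ℕ} (E : Finset (Finset (Fin n))) (x : Fin n → ℂ) (i : Fin n) : ℂ :=
  ∑ e ∈ E.filter (fun e => i ∈ e), ∏ j ∈ e.erase i, x j

theorem stmt_0 {n k : ℕ} (hk : 3 ≤ k) (hn : k ≤ n)
    (E : Finset (Finset (Fin n))) (hE : ∀ e ∈ E, e.card = k)
    (V1 : Finset (Fin n)) (hV1 : V1.Nonempty) (hV2 : V1ᶜ.Nonempty)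
    (hbip : ∀ e ∈ E, (e ∩ V1).card = 1)
    (lam : ℂ) (x : Fin n → ℂ) (hx : x ≠ 0)
    (heig : ∀ i, adjC E x i = lam * x i ^ (k - 1))
    (α : ℂ) (hα : α ^ k = 1) :
    (fun i => if i ∈ V1 then α * x i else x i) ≠ 0 ∧
      (∀ i, adjC E (fun i => if i ∈ V1 then α * x i else x i) i =
        (α * lam) * (if i ∈ V1 then α * x i else x i) ^ (k - 1)) := by
  have hk0 : k ≠ 0 := by omega
  have hαne : α ≠ 0 := by
    intro h
    rw [h, zero_pow hk0] at hα
    exact zero_ne_one hα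
  have hkk : k - 1 + 1 = k := by omega
  have hαpow : α * α ^ (k - 1) = 1 := by
    rw [← pow_succ', hkk, hα]
  constructor
  · intro h
    apply hx
    funext i
    have hi : (if i ∈ V1 then α * x i else x i) = 0 := congrFun h i
    by_cases hiV : i ∈ V1
    · simp only [hiV, if_true] at hi
      rcases mul_eq_zero.mp hi with h' | h'
      · exact absurd h' hαne
      · exact h'
    · simpa [hiV] using hi
  · intro i
    by_cases hiV : i ∈ V1
    · -- every edge containing i has e ∩ V1 = {i}; all other vertices outside V1
      have key : adjC E (fun j => if j ∈ V1 then α * x j else x j) i = adjC E x i := by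
        unfold adjC
        apply Finset.sum_congr rfl
        intro e he
        rw [Finset.mem_filter] at he
        apply Finset.prod_congr rfl
        intro j hj
        have hji : j ≠ i := Finset.ne_of_mem_erase hj
        have hje : j ∈ e := Finset.mem_of_mem_erase hj
        have hcard := hbip e he.1
        obtain ⟨a, ha⟩ := Finset.card_eq_one.mp hcard
        have hiin : i ∈ e ∩ V1 := Finset.mem_inter.mpr ⟨he.2, hiV⟩
        rw [ha, Finset.mem_singleton] at hiin
        subst hiin
        have hjV : j ∉ V1 := by
          intro hjV
          have : j ∈ e ∩ V1 := Finset.mem_inter.mpr ⟨hje, hjV⟩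
          rw [ha, Finset.mem_singleton] at this
          exact hji this
        simp [hjV]
      rw [key, heig i]
      simp only [hiV, if_true]
      rw [mul_pow]
      linear_combination (-(lam * x i ^ (k - 1))) * hαpow
    · -- every edge containing i has a unique vertex a ∈ V1, a ≠ i
      have key : adjC E (fun j => if j ∈ V1 then α * x j else x j) i = α * adjC E x i := by
        unfold adjC
        rw [Finset.mul_sum]
        apply Finset.sum_congr rfl
        intro e he
        rw [Finset.mem_filter] at he
        have hcard := hbip e he.1
        obtain ⟨a, ha⟩ := Finset.card_eq_one.mp hcard
        have haV : a ∈ V1 := by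
          have : a ∈ e ∩ V1 := by rw [ha]; exact Finset.mem_singleton_self a
          exact (Finset.mem_inter.mp this).2
        have hae : a ∈ e := by
          have : a ∈ e ∩ V1 := by rw [ha]; exact Finset.mem_singleton_self a
          exact (Finset.mem_inter.mp this).1
        have hai : a ≠ i := fun h => hiV (h ▸ haV)
        have haer : a ∈ e.erase i := Finset.mem_erase.mpr ⟨hai, hae⟩
        rw [← Finset.mul_prod_erase _ _ haer, ← Finset.mul_prod_erase _ x haer]
        have hrest : ∀ j ∈ (e.erase i).erase a,
            (if j ∈ V1 then α * x j else x j) = x j := by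
          intro j hj
          have hja : j ≠ a := Finset.ne_of_mem_erase hj
          have hje : j ∈ e := Finset.mem_of_mem_erase (Finset.mem_of_mem_erase hj)
          have hjV : j ∉ V1 := by
            intro hjV
            have : j ∈ e ∩ V1 := Finset.mem_inter.mpr ⟨hje, hjV⟩
            rw [ha, Finset.mem_singleton] at this
            exact hja this
          simp [hjV]
        rw [Finset.prod_congr rfl hrest]
        simp [haV]
        ring
      rw [key, heig i]
      simp only [hiV, if_false]
      ring
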